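/- For every δ ∈ ℂ and 0 ≤ k ≤ N−1, the normalized GMRES residual satisfies w_k(δ) = σ_k(δ)^{−1} · Σ_{j=0}^{k} conj(q_j(δ))·v_{j+1}. -/

import Mathlib

open Polynomial Matrix Finset

/-- The standard inner product `x^* y` on `ℂ^n` (conjugate-linear in the first slot). -/
noncomputable def inn {n : ℕ} (x y : Fin n → ℂ) : ℂ := ∑ i, (starRingEnd ℂ) (x i) * y i

/-- The Euclidean norm on `ℂ^n`. -/
noncomputable def nrm {n : ℕ} (x : Fin n → ℂ) : ℝ := Real.sqrt (inn x x).re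

/-- `σ_k(δ) = sqrt(Σ_{j=0}^k |q_j(δ)|²)`. -/
noncomputable def sigmaP (q : ℕ → Polynomial ℂ) (δ : ℂ) (k : ℕ) : ℝ :=
  Real.sqrt (∑ j ∈ Finset.range (k + 1), ‖(q j).eval δ‖ ^ 2)


lemma inn_add_left {n : ℕ} (x y z : Fin n → ℂ) : inn (x + y) z = inn x z + inn y z := by
  simp [inn, add_mul, Finset.sum_add_distrib]

lemma inn_smul_left {n : ℕ} (c : ℂ) (x y : Fin n → ℂ) :
    inn (c • x) y = (starRingEnd ℂ) c * inn x y := by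
  simp [inn, Finset.mul_sum, mul_assoc]

lemma inn_smul_right {n : ℕ} (c : ℂ) (x y : Fin n → ℂ) : inn x (c • y) = c * inn x y := by
  simp [inn, Finset.mul_sum]; ring_nf
  exact Finset.sum_congr rfl fun i _ => by ring

lemma inn_add_right {n : ℕ} (x y z : Fin n → ℂ) : inn x (y + z) = inn x y + inn x z := by
  simp [inn, mul_add, Finset.sum_add_distrib]

lemma inn_sub_right {n : ℕ} (x y z : Fin n → ℂ) : inn x (y - z) = inn x y - inn x z := by
  simp [inn, mul_sub, Finset.sum_sub_distrib]

lemma inn_sub_left {n : ℕ} (x y z : Fin n → ℂ) : inn (x - y) z = inn x z - inn y z := by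
  simp [inn, sub_mul, Finset.sum_sub_distrib]

lemma inn_conj {n : ℕ} (x y : Fin n → ℂ) : inn x y = (starRingEnd ℂ) (inn y x) := by
  simp [inn, map_sum]; exact Finset.sum_congr rfl fun i _ => by ring

lemma inn_sum_left {n : ℕ} {ι : Type*} (s : Finset ι) (f : ι → Fin n → ℂ) (x : Fin n → ℂ) :
    inn (∑ i ∈ s, f i) x = ∑ i ∈ s, inn (f i) x := by
  classical
  induction s using Finset.induction with
  | empty => simp [inn]
  | insert _ _ h ih => simp [Finset.sum_insert h, inn_add_left, ih]

lemma inn_sum_right {n : ℕ} {ι : Type*} (s : Finset ι) (f : ι → Fin n → ℂ) (x : Fin n → ℂ) :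
    inn x (∑ i ∈ s, f i) = ∑ i ∈ s, inn x (f i) := by
  classical
  induction s using Finset.induction with
  | empty => simp [inn]
  | insert _ _ h ih => simp [Finset.sum_insert h, inn_add_right, ih]

lemma inn_zero_right {n : ℕ} (x : Fin n → ℂ) : inn x 0 = 0 := by simp [inn]

lemma inn_zero_left {n : ℕ} (x : Fin n → ℂ) : inn 0 x = 0 := by simp [inn]

lemma inn_self_eq {n : ℕ} (x : Fin n → ℂ) :
    inn x x = ((∑ i, ‖x i‖ ^ 2 : ℝ) : ℂ) := by
  simp only [inn, Complex.ofReal_sum]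
  exact Finset.sum_congr rfl fun i _ => by
    rw [← Complex.normSq_eq_conj_mul_self, Complex.sq_norm]

lemma inn_self_eq_zero {n : ℕ} {x : Fin n → ℂ} (h : inn x x = 0) : x = 0 := by
  rw [inn_self_eq] at h
  have h2 : (∑ i, ‖x i‖ ^ 2 : ℝ) = 0 := by exact_mod_cast h
  have := (Finset.sum_eq_zero_iff_of_nonneg (fun i _ => sq_nonneg (‖x i‖))).mp h2
  funext i
  have := this i (Finset.mem_univ i)
  have : ‖x i‖ = 0 := by nlinarith [norm_nonneg (x i)]
  simpa using this

lemma inn_span_right_zero {n : ℕ} {S : Set (Fin n → ℂ)} {d : Fin n → ℂ}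
    (h : ∀ x ∈ S, inn d x = 0) : ∀ x ∈ Submodule.span ℂ S, inn d x = 0 := by
  intro x hx
  induction hx using Submodule.span_induction with
  | mem x hxS => exact h x hxS
  | zero => exact inn_zero_right d
  | add a b _ _ ha hb => rw [inn_add_right, ha, hb, add_zero]
  | smul c a _ ha => rw [inn_smul_right, ha, mul_zero]

lemma inn_span_left_zero {n : ℕ} {S : Set (Fin n → ℂ)} {d : Fin n → ℂ}
    (h : ∀ x ∈ S, inn x d = 0) : ∀ x ∈ Submodule.span ℂ S, inn x d = 0 := by
  intro x hx
  induction hx using Submodule.span_induction with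
  | mem x hxS => exact h x hxS
  | zero => exact inn_zero_left d
  | add a b _ _ ha hb => rw [inn_add_left, ha, hb, add_zero]
  | smul c a _ ha => rw [inn_smul_left, ha, mul_zero]

lemma nrm_pos {n : ℕ} {x : Fin n → ℂ} (h : x ≠ 0) : 0 < nrm x := by
  rw [nrm]
  apply Real.sqrt_pos.mpr
  rw [inn_self_eq, Complex.ofReal_re]
  rcases lt_or_eq_of_le (Finset.sum_nonneg fun i _ => sq_nonneg (‖x i‖)) with hlt | heq
  · exact hlt
  · exfalso; apply h; apply inn_self_eq_zero; rw [inn_self_eq, ← heq]; simp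

/-- The normalized GMRES residual satisfies
`w_k(δ) = σ_k(δ)⁻¹ Σ_{j=0}^k conj(q_j(δ)) v_{j+1}` (`0`-based: `v_{j+1}` is `v j`). -/
theorem stmt8 (n N : ℕ) (hN : 1 ≤ N) (hNn : N ≤ n)
    (A : Matrix (Fin n) (Fin n) ℂ) (b : Fin n → ℂ) (hb : b ≠ 0)
    (v : ℕ → Fin n → ℂ)
    (horth : ∀ i j : ℕ, i < N → j < N → inn (v i) (v j) = if i = j then 1 else 0)
    (hv1 : v 0 = (((nrm b)⁻¹ : ℝ) : ℂ) • b)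
    (H : Matrix (Fin N) (Fin N) ℂ)
    (hHess : ∀ i j : Fin N, (j : ℕ) + 1 < (i : ℕ) → H i j = 0)
    (hsub : ∀ (k : ℕ) (hk : k + 1 < N),
      0 < (H ⟨k + 1, hk⟩ ⟨k, Nat.lt_of_succ_lt hk⟩).re ∧
        (H ⟨k + 1, hk⟩ ⟨k, Nat.lt_of_succ_lt hk⟩).im = 0)
    (harn : ∀ (k : ℕ) (hk : k + 1 < N),
      A.mulVec (v k) = ∑ j : Fin (k + 2),
        H ⟨(j : ℕ), Nat.lt_of_le_of_lt (Nat.lt_succ_iff.mp j.isLt) hk⟩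
          ⟨k, Nat.lt_of_succ_lt hk⟩ • v (j : ℕ))
    (harnN : A.mulVec (v (N - 1)) =
      ∑ j : Fin N, H j ⟨N - 1, Nat.sub_lt hN Nat.one_pos⟩ • v (j : ℕ))
    (q : ℕ → Polynomial ℂ) (hq0 : q 0 = 1)
    (hqrec : ∀ (k : ℕ) (hk : k + 1 < N),
      Polynomial.C (H ⟨k + 1, hk⟩ ⟨k, Nat.lt_of_succ_lt hk⟩) * q (k + 1) =
        Polynomial.X * q k -
          ∑ j : Fin (k + 1),
            Polynomial.C (H ⟨(j : ℕ), Nat.lt_trans j.isLt hk⟩ ⟨k, Nat.lt_of_succ_lt hk⟩) *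
              q (j : ℕ))
    (u : ℂ → ℕ → Fin n → ℂ)
    (humem : ∀ (δ : ℂ) (k : ℕ), k < N →
      u δ k ∈ Submodule.span ℂ {x : Fin n → ℂ | ∃ j < k, x = (A - δ • 1).mulVec (v j)})
    (huperp : ∀ (δ : ℂ) (k : ℕ), k < N →
      ∀ y ∈ Submodule.span ℂ {x : Fin n → ℂ | ∃ j < k, x = (A - δ • 1).mulVec (v j)},
        inn y (b - u δ k) = 0)
    (r : ℂ → ℕ → Fin n → ℂ) (hr : ∀ δ k, r δ k = b - u δ k)
    (hrne : ∀ (δ : ℂ) (k : ℕ), k < N → r δ k ≠ 0)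
    (w : ℂ → ℕ → Fin n → ℂ) (hw : ∀ δ k, w δ k = (((nrm (r δ k))⁻¹ : ℝ) : ℂ) • r δ k)
 :
    ∀ (δ : ℂ) (k : ℕ), k < N →
      w δ k = (((sigmaP q δ k)⁻¹ : ℝ) : ℂ) •
        ∑ j ∈ Finset.range (k + 1), (starRingEnd ℂ) ((q j).eval δ) • v j := by
  
  intro δ k hk
  have hQ : ∀ j, (q j).eval δ = (q j).eval δ := fun _ => rfl
  set Q : ℕ → ℂ := fun j => (q j).eval δ with hQdef
  set y : Fin n → ℂ := ∑ j ∈ Finset.range (k + 1), (starRingEnd ℂ) ((q j).eval δ) • v j with hy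
  have hyQ : y = ∑ j ∈ Finset.range (k + 1), (starRingEnd ℂ) (Q j) • v j := rfl
  have hQ0 : Q 0 = 1 := by simp [hQdef, hq0]
  -- inner products with basis vectors
  have hyv : ∀ i : ℕ, i < N → inn y (v i) = if i ≤ k then Q i else 0 := by
    intro i hiN
    rw [hyQ, inn_sum_left]
    rw [Finset.sum_congr rfl (fun j hj => by
      rw [inn_smul_left, horth j i (lt_of_le_of_lt (Nat.lt_succ_iff.mp (Finset.mem_range.mp hj)) hk) hiN])]
    simp only [Complex.conj_conj]
    by_cases hik : i ≤ k
    · rw [if_pos hik, Finset.sum_eq_single i]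
      · simp
      · intro j hj hji; simp [hji]
      · intro hi; exact absurd (Finset.mem_range.mpr (Nat.lt_succ_of_le hik)) hi
    · rw [if_neg hik, Finset.sum_eq_zero]
      intro j hj
      have hne : j ≠ i := fun h => hik (h ▸ Nat.lt_succ_iff.mp (Finset.mem_range.mp hj))
      simp [hne]
  set σ2 : ℝ := ∑ j ∈ Finset.range (k + 1), ‖Q j‖ ^ 2 with hσ2
  have hyy : inn y y = (σ2 : ℂ) := by
    rw [hyQ, inn_sum_right, hσ2, Complex.ofReal_sum]
    refine Finset.sum_congr rfl fun j hj => ?_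
    have hjN : j < N := lt_of_le_of_lt (Nat.lt_succ_iff.mp (Finset.mem_range.mp hj)) hk
    rw [inn_smul_right, hyv j hjN, if_pos (Nat.lt_succ_iff.mp (Finset.mem_range.mp hj))]
    rw [mul_comm, Complex.mul_conj']
    push_cast
    ring
  -- the shifted Krylov generator set
  set S : Set (Fin n → ℂ) := {x : Fin n → ℂ | ∃ j < k, x = (A - δ • 1).mulVec (v j)} with hS
  have hshift : ∀ j : ℕ, (A - δ • 1).mulVec (v j) = A.mulVec (v j) - δ • v j := by
    intro j
    rw [Matrix.sub_mulVec, Matrix.smul_mulVec, Matrix.one_mulVec]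
  have hgen : ∀ x ∈ S, inn y x = 0 := by
    rintro x ⟨j, hjk, rfl⟩
    have hjN : j + 1 < N := lt_of_le_of_lt hjk hk
    rw [hshift, inn_sub_right, inn_smul_right, harn j hjN, inn_sum_right]
    rw [Finset.sum_congr rfl (fun i _ => by
      rw [inn_smul_right,
        hyv i (lt_of_le_of_lt (Nat.lt_succ_iff.mp i.isLt) hjN),
        if_pos (le_trans (Nat.lt_succ_iff.mp i.isLt) hjk)])]
    have hrec := congrArg (Polynomial.eval δ) (hqrec j hjN)
    simp only [Polynomial.eval_mul, Polynomial.eval_C, Polynomial.eval_sub, Polynomial.eval_X,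
      Polynomial.eval_finset_sum] at hrec
    rw [Fin.sum_univ_castSucc]
    simp only [Fin.coe_castSucc, Fin.val_last]
    rw [hyv j (Nat.lt_of_succ_lt hjN), if_pos (le_of_lt hjk)]
    linear_combination hrec
  have hspan : ∀ x ∈ Submodule.span ℂ S, inn y x = 0 := inn_span_right_zero hgen
  have hbpos : 0 < nrm b := nrm_pos hb
  have hyb : inn y b = ((nrm b : ℝ) : ℂ) := by
    have hb' : b = ((nrm b : ℝ) : ℂ) • v 0 := by
      rw [hv1, smul_smul, ← Complex.ofReal_mul, mul_inv_cancel₀ (ne_of_gt hbpos)]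
      simp
    conv_lhs => rw [hb']
    rw [inn_smul_right, hyv 0 (lt_of_le_of_lt (Nat.zero_le k) hk),
      if_pos (Nat.zero_le k), hQ0, mul_one]
  have hyr : inn y (r δ k) = ((nrm b : ℝ) : ℂ) := by
    rw [hr, inn_sub_right, hspan _ (humem δ k hk), sub_zero]
    exact hyb
  -- membership of the basis vectors in span S ⊔ span {b}
  set M : Submodule ℂ (Fin n → ℂ) := Submodule.span ℂ S ⊔ Submodule.span ℂ {b} with hM
  have hvM : ∀ i, i ≤ k → v i ∈ M := by
    intro i
    induction i using Nat.strong_induction_on with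
    | _ i IH =>
      intro hik
      match i, IH with
      | 0, _ =>
        rw [hv1]
        exact Submodule.smul_mem _ _
          (Submodule.mem_sup_right (Submodule.mem_span_singleton_self b))
      | (j+1), IH =>
        have hjk : j < k := Nat.lt_of_succ_le hik
        have hjN : j + 1 < N := lt_of_le_of_lt hik hk
        have hHne : H ⟨j+1, hjN⟩ ⟨j, Nat.lt_of_succ_lt hjN⟩ ≠ 0 := by
          intro h0
          have h1 := (hsub j hjN).1
          rw [h0] at h1; simp at h1
        have h2 : (∑ i : Fin (j+1),
              H ⟨(i : ℕ), Nat.lt_trans i.isLt hjN⟩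
                ⟨j, Nat.lt_of_succ_lt hjN⟩ • v (i : ℕ))
            + H ⟨j+1, hjN⟩ ⟨j, Nat.lt_of_succ_lt hjN⟩ • v (j+1) = A.mulVec (v j) := by
          rw [harn j hjN]
          conv_rhs => rw [Fin.sum_univ_castSucc]
          simp only [Fin.coe_castSucc, Fin.val_last]
        have h3 : H ⟨j+1, hjN⟩ ⟨j, Nat.lt_of_succ_lt hjN⟩ • v (j+1)
            = ((A - δ • 1).mulVec (v j) + δ • v j) - ∑ i : Fin (j+1),
              H ⟨(i : ℕ), Nat.lt_trans i.isLt hjN⟩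
                ⟨j, Nat.lt_of_succ_lt hjN⟩ • v (i : ℕ) := by
          rw [hshift, sub_add_cancel]
          exact eq_sub_of_add_eq' h2
        have hmem : H ⟨j+1, hjN⟩ ⟨j, Nat.lt_of_succ_lt hjN⟩ • v (j+1) ∈ M := by
          rw [h3]
          refine Submodule.sub_mem _ (Submodule.add_mem _ ?_ ?_) ?_
          · exact Submodule.mem_sup_left (Submodule.subset_span ⟨j, hjk, rfl⟩)
          · exact Submodule.smul_mem _ _ (IH j (Nat.lt_succ_self j) (le_of_lt hik))
          · exact Submodule.sum_mem _ fun i _ => Submodule.smul_mem _ _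
              (IH i i.isLt (le_trans (Nat.lt_succ_iff.mp i.isLt) (le_of_lt hjk)))
        have h4 := Submodule.smul_mem M (H ⟨j+1, hjN⟩ ⟨j, Nat.lt_of_succ_lt hjN⟩)⁻¹ hmem
        rwa [smul_smul, inv_mul_cancel₀ hHne, one_smul] at h4
  -- σ² is at least 1
  have hσ2_ge : (1 : ℝ) ≤ σ2 := by
    have h1 := Finset.single_le_sum (f := fun j => ‖Q j‖ ^ 2)
      (fun i _ => sq_nonneg _) (Finset.mem_range.mpr (Nat.succ_pos k))
    simpa [hQ0] using h1
  have hσ2pos : (0 : ℝ) < σ2 := lt_of_lt_of_le one_pos hσ2_ge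
  set c : ℝ := nrm b / σ2 with hc
  have hcpos : 0 < c := div_pos hbpos hσ2pos
  set d : Fin n → ℂ := r δ k - ((c : ℝ) : ℂ) • y with hd
  have hyd : inn y d = 0 := by
    rw [hd, inn_sub_right, hyr, inn_smul_right, hyy, hc]
    push_cast
    field_simp
    rw [div_self (by exact_mod_cast ne_of_gt hσ2pos), sub_self, mul_zero]
  have hdperp : ∀ x ∈ Submodule.span ℂ S, inn x d = 0 := by
    intro x hx
    have h1 : inn x (r δ k) = 0 := by rw [hr]; exact huperp δ k hk x hx
    have h2 : inn x y = 0 := by rw [inn_conj, hspan x hx, map_zero]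
    rw [hd, inn_sub_right, inn_smul_right, h1, h2, mul_zero, sub_zero]
  have hdM : d ∈ M := by
    have hbM : b ∈ M := Submodule.mem_sup_right (Submodule.mem_span_singleton_self b)
    have hyM : y ∈ M := by
      rw [hyQ]
      exact Submodule.sum_mem _ fun j hj => Submodule.smul_mem _ _
        (hvM j (Nat.lt_succ_iff.mp (Finset.mem_range.mp hj)))
    have huM : u δ k ∈ M := Submodule.mem_sup_left (humem δ k hk)
    rw [hd, hr]
    exact Submodule.sub_mem _ (Submodule.sub_mem _ hbM huM) (Submodule.smul_mem _ _ hyM)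
  obtain ⟨s, hs, z, hz, hszd⟩ := Submodule.mem_sup.mp hdM
  obtain ⟨t, rfl⟩ := Submodule.mem_span_singleton.mp hz
  have ht0 : t = 0 := by
    have h0 : inn y (s + t • b) = inn y s + t * inn y b := by
      rw [inn_add_right, inn_smul_right]
    rw [hszd, hyd, hspan s hs, hyb, zero_add] at h0
    rcases mul_eq_zero.mp h0.symm with h | h
    · exact h
    · exact absurd h (by exact_mod_cast ne_of_gt hbpos)
  have hds : d = s := by rw [← hszd, ht0, zero_smul, add_zero]
  have hd0 : d = 0 := inn_self_eq_zero (by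
    have : d ∈ Submodule.span ℂ S := hds ▸ hs
    exact hdperp d this)
  have hreq : r δ k = ((c : ℝ) : ℂ) • y := by
    have := hd ▸ hd0
    exact sub_eq_zero.mp this
  -- norm of the residual
  have hsig : sigmaP q δ k = Real.sqrt σ2 := by
    rw [sigmaP, hσ2]
  have hσpos : 0 < Real.sqrt σ2 := Real.sqrt_pos.mpr hσ2pos
  have hnrmr : nrm (r δ k) = c * Real.sqrt σ2 := by
    rw [nrm, hreq, inn_smul_left, inn_smul_right, hyy]
    rw [Complex.conj_ofReal, ← Complex.ofReal_mul, ← Complex.ofReal_mul, Complex.ofReal_re]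
    rw [show c * (c * σ2) = c ^ 2 * σ2 by ring, Real.sqrt_mul (sq_nonneg c),
      Real.sqrt_sq hcpos.le]
  rw [hw, hnrmr, hreq, smul_smul, hsig]
  congr 1
  rw [← Complex.ofReal_mul]
  congr 1
  rw [mul_inv, mul_comm, ← mul_assoc, mul_inv_cancel₀ (ne_of_gt hcpos), one_mul]
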